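/- Let (α_λ, ψ_λ) be a solution of (P)_λ and suppose λp ≤ Λ(Ω, 2p), where Λ(Ω, 2p) is the optimal constant in the Sobolev embedding H¹₀(Ω) ↪ L^{2p}(Ω), i.e. Λ(Ω,2p) = inf over nonzero w ∈ H¹₀(Ω) of ∫|∇w|² / (∫|w|^{2p})^{1/p}. Then ν_{1,λ} := inf over nonzero w ∈ H¹₀(Ω) of (∫|∇w|² − λp ∫ ρ_λ^{1/q} w²)/(∫ ρ_λ^{1/q} w²) ≥ 0. More precisely, ν_{1,λ} ≥ Λ(Ω,2p) − λp. -/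

import Mathlib

open MeasureTheory Real Bornology Set

noncomputable section

/-- Euclidean space ℝ^N. -/
abbrev EN (N : ℕ) := EuclideanSpace ℝ (Fin N)

/-- The Laplacian, as the sum of second derivatives in the coordinate directions. -/
def lap {N : ℕ} (f : EN N → ℝ) (x : EN N) : ℝ :=
  ∑ i : Fin N, iteratedFDeriv ℝ 2 f x ![EuclideanSpace.single i 1, EuclideanSpace.single i 1]

/-- The average of `η` over `Ω` with respect to the weight `w`. -/
def wavg {N : ℕ} (Ω : Set (EN N)) (w η : EN N → ℝ) : ℝ :=
  (∫ x in Ω, w x * η x) / ∫ x in Ω, w x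

/-- Dirichlet energy ∫_Ω |∇φ|². -/
def dirE {N : ℕ} (Ω : Set (EN N)) (φ : EN N → ℝ) : ℝ := ∫ x in Ω, ‖fderiv ℝ φ x‖ ^ 2

/-- Admissible (nontrivial) test functions: a smooth proxy for H¹₀(Ω) ∖ {0}. -/
def testfun {N : ℕ} (Ω : Set (EN N)) (φ : EN N → ℝ) : Prop :=
  ContDiff ℝ 2 φ ∧ (∀ x ∉ Ω, φ x = 0) ∧ ∃ x ∈ Ω, φ x ≠ 0

/-- If `(α,ψ)` solves (P)_λ and `λp ≤ Λ(Ω,2p)` (the best Sobolev constant of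
`H¹₀(Ω) ↪ L^{2p}(Ω)`), then the standard first eigenvalue `ν_{1,λ}` of the linearization
is nonnegative; more precisely `ν_{1,λ} ≥ Λ(Ω,2p) − λp`. -/
theorem stmt5 {N : ℕ} (Ω : Set (EN N)) (hΩo : IsOpen Ω) (hΩb : IsBounded Ω)
    (hvol : volume Ω = 1)
    (p q lam : ℝ) (hp : 1 ≤ p) (hq : 1 / p + 1 / q = 1) (hlam : 0 ≤ lam)
    (α : ℝ) (ψ : EN N → ℝ) (hψ : ContDiff ℝ 2 ψ)
    (w : EN N → ℝ) (hw : w = fun x => (α + lam * ψ x) ^ (p - 1))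
    (heqP : ∀ x ∈ Ω, -lap ψ x = (α + lam * ψ x) ^ p)
    (hmass : (∫ x in Ω, (α + lam * ψ x) ^ p) = 1)
    (hψpos : ∀ x ∈ Ω, 0 < ψ x) (hψbd : ∀ x ∈ frontier Ω, ψ x = 0) (hα : 0 ≤ α)
    (Λ : ℝ)
    (hΛ : Λ = sInf {r : ℝ | ∃ φ : EN N → ℝ, testfun Ω φ ∧
        r = dirE Ω φ / (∫ x in Ω, |φ x| ^ (2 * p)) ^ (1 / p)})
    (hsub : lam * p ≤ Λ) :
    Λ - lam * p ≤
      sInf {r : ℝ | ∃ φ : EN N → ℝ, testfun Ω φ ∧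
        r = (dirE Ω φ - lam * p * ∫ x in Ω, w x * φ x ^ 2) / ∫ x in Ω, w x * φ x ^ 2} ∧
    0 ≤ sInf {r : ℝ | ∃ φ : EN N → ℝ, testfun Ω φ ∧
        r = (dirE Ω φ - lam * p * ∫ x in Ω, w x * φ x ^ 2) / ∫ x in Ω, w x * φ x ^ 2} := by
  have hΩm : MeasurableSet Ω := hΩo.measurableSet
  have hp0 : 0 < p := by linarith
  have hΩvol_ne : volume Ω ≠ ⊤ := by rw [hvol]; exact ENNReal.one_ne_top
  haveI hfin : IsFiniteMeasure (volume.restrict Ω) :=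
    ⟨by rw [Measure.restrict_apply_univ, hvol]; exact ENNReal.one_lt_top⟩
  have hw' : ∀ x, w x = (α + lam * ψ x) ^ (p - 1) := fun x => by rw [hw]
  have hacont : Continuous fun x : EN N => α + lam * ψ x :=
    continuous_const.add (continuous_const.mul hψ.continuous)
  have ha_pos : ∀ x ∈ Ω, 0 < α + lam * ψ x := by
    intro x hx
    rcases hα.lt_or_eq with h | h
    · have := mul_nonneg hlam (hψpos x hx).le; linarith
    · rcases hlam.lt_or_eq with hl | hl
      · have := mul_pos hl (hψpos x hx); linarith
      · exfalso
        rw [← h, ← hl] at hmass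
        simp [Real.zero_rpow (ne_of_gt hp0)] at hmass
  -- bounds from compactness
  have hbound : ∀ g : EN N → ℝ, Continuous g → ∃ C, 1 ≤ C ∧ ∀ x ∈ Ω, |g x| ≤ C := by
    intro g hg
    obtain ⟨C, hC⟩ := hΩb.isCompact_closure.exists_bound_of_continuousOn hg.continuousOn
    refine ⟨max 1 C, le_max_left _ _, fun x hx => ?_⟩
    exact le_trans (by simpa [Real.norm_eq_abs] using hC x (subset_closure hx)) (le_max_right _ _)
  obtain ⟨A, hA1, hA⟩ := hbound _ hacont
  have hw_nonneg : ∀ x ∈ Ω, 0 ≤ w x := fun x hx => by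
    rw [hw' x]; exact Real.rpow_nonneg (ha_pos x hx).le _
  have hwA : ∀ x ∈ Ω, |w x| ≤ A ^ (p - 1) := by
    intro x hx
    rw [abs_of_nonneg (hw_nonneg x hx), hw' x]
    exact Real.rpow_le_rpow (ha_pos x hx).le ((le_abs_self _).trans (hA x hx)) (by linarith)
  have hwc : Continuous w := by
    rw [hw]; exact (Real.continuous_rpow_const (by linarith)).comp hacont
  have hwm : Measurable w := hwc.measurable
  have hae : ∀ f : EN N → ℝ, (∀ x ∈ Ω, 0 ≤ f x) → 0 ≤ᵐ[volume.restrict Ω] f := by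
    intro f h
    exact (ae_restrict_iff' hΩm).mpr (ae_of_all _ h)
  have hIntOn : ∀ (f : EN N → ℝ), Measurable f →
      (∃ C, ∀ x ∈ Ω, |f x| ≤ C) → IntegrableOn f Ω := by
    rintro f hf ⟨C, hC⟩
    apply Measure.integrableOn_of_bounded hΩvol_ne hf.aestronglyMeasurable
    rw [ae_restrict_iff' hΩm]
    exact ae_of_all _ fun x hx => by simpa [Real.norm_eq_abs] using hC x hx
  have hΛnn : 0 ≤ Λ := le_trans (mul_nonneg hlam hp0.le) hsub
  -- key facts for every test function
  have key : ∀ φ : EN N → ℝ, testfun Ω φ →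
      0 < (∫ x in Ω, w x * φ x ^ 2) ∧
      Λ * (∫ x in Ω, w x * φ x ^ 2) ≤ dirE Ω φ := by
    intro φ hφ
    obtain ⟨hφC, hφ0, x₀, hx₀Ω, hx₀⟩ := hφ
    obtain ⟨K, hK1, hK⟩ := hbound φ hφC.continuous
    have hφm : Measurable φ := hφC.continuous.measurable
    -- a small ball where φ ≠ 0
    obtain ⟨ε, hε, hsubB⟩ := Metric.isOpen_iff.mp
      (hΩo.inter (isOpen_compl_singleton.preimage hφC.continuous)) x₀ ⟨hx₀Ω, hx₀⟩
    have hballΩ : Metric.ball x₀ ε ⊆ Ω := fun y hy => (hsubB hy).1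
    have hballφ : ∀ y ∈ Metric.ball x₀ ε, φ y ≠ 0 := fun y hy => (hsubB hy).2
    -- integrability of w * φ²
    have hf_int : IntegrableOn (fun x => w x * φ x ^ 2) Ω := by
      refine hIntOn _ (hwm.mul (hφm.pow_const 2)) ⟨A ^ (p - 1) * K ^ 2, ?_⟩
      intro x hx
      rw [abs_mul]
      refine mul_le_mul (hwA x hx) ?_ (abs_nonneg _) (by positivity)
      rw [abs_pow]
      exact pow_le_pow_left₀ (abs_nonneg _) (hK x hx) 2
    -- positivity of ∫ w φ²
    have hnnI : 0 ≤ᵐ[volume.restrict Ω] fun x => w x * φ x ^ 2 :=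
      hae _ fun x hx => mul_nonneg (hw_nonneg x hx) (sq_nonneg _)
    have hI_pos : 0 < ∫ x in Ω, w x * φ x ^ 2 := by
      rw [setIntegral_pos_iff_support_of_nonneg_ae hnnI hf_int]
      refine lt_of_lt_of_le (Metric.measure_ball_pos volume x₀ hε) (measure_mono ?_)
      intro y hy
      refine ⟨?_, hballΩ hy⟩
      have hwy : 0 < w y := by
        rw [hw' y]; exact Real.rpow_pos_of_pos (ha_pos y (hballΩ hy)) _
      exact mul_ne_zero hwy.ne' (pow_ne_zero 2 (hballφ y hy))
    -- integrability and positivity of ∫ |φ|^(2p)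
    have hJ_int : IntegrableOn (fun x => |φ x| ^ (2 * p)) Ω := by
      refine hIntOn _ (((Real.continuous_rpow_const (by positivity)).comp
        hφC.continuous.abs).measurable) ⟨K ^ (2 * p), ?_⟩
      intro x hx
      rw [abs_of_nonneg (Real.rpow_nonneg (abs_nonneg _) _)]
      exact Real.rpow_le_rpow (abs_nonneg _) (hK x hx) (by positivity)
    have hJ_pos : 0 < ∫ x in Ω, |φ x| ^ (2 * p) := by
      rw [setIntegral_pos_iff_support_of_nonneg_ae
        (hae _ fun x _ => Real.rpow_nonneg (abs_nonneg _) _) hJ_int]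
      refine lt_of_lt_of_le (Metric.measure_ball_pos volume x₀ hε) (measure_mono ?_)
      intro y hy
      exact ⟨(Real.rpow_pos_of_pos (abs_pos.mpr (hballφ y hy)) _).ne', hballΩ hy⟩
    have hJ'_pos : 0 < (∫ x in Ω, |φ x| ^ (2 * p)) ^ (1 / p) :=
      Real.rpow_pos_of_pos hJ_pos _
    -- Hölder: ∫ w φ² ≤ (∫ |φ|^(2p))^(1/p)
    have hHolder : (∫ x in Ω, w x * φ x ^ 2) ≤ (∫ x in Ω, |φ x| ^ (2 * p)) ^ (1 / p) := by
      rcases hp.lt_or_eq with hp1 | hp1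
      · -- case p > 1
        have h1p : 1 / p < 1 := by rw [div_lt_one hp0]; exact hp1
        have hq0 : 0 < q := by
          have : 0 < 1 / q := by linarith
          exact one_div_pos.mp this
        have hpq : Real.HolderConjugate p q := Real.holderConjugate_iff.mpr ⟨hp1, by simpa [one_div] using hq⟩
        have hpqs : Real.HolderConjugate q p := hpq.symm
        have hqp : (p - 1) * q = p := by
          have hpne : p ≠ 0 := hp0.ne'
          have hqne : q ≠ 0 := hq0.ne'
          field_simp at hq
          nlinarith [hq]
        have hmemw : MemLp w (ENNReal.ofReal q) (volume.restrict Ω) := by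
          refine MemLp.of_bound hwm.aestronglyMeasurable (A ^ (p - 1)) ?_
          rw [ae_restrict_iff' hΩm]
          exact ae_of_all _ fun x hx => by simpa [Real.norm_eq_abs] using hwA x hx
        have hmemφ : MemLp (fun x => φ x ^ 2) (ENNReal.ofReal p) (volume.restrict Ω) := by
          refine MemLp.of_bound ((hφm.pow_const 2).aestronglyMeasurable) (K ^ 2) ?_
          rw [ae_restrict_iff' hΩm]
          refine ae_of_all _ fun x hx => ?_
          rw [Real.norm_eq_abs, abs_pow]
          exact pow_le_pow_left₀ (abs_nonneg _) (hK x hx) 2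
        have H := MeasureTheory.integral_mul_le_Lp_mul_Lq_of_nonneg hpqs
          (hae w hw_nonneg) (hae _ fun x _ => sq_nonneg (φ x)) hmemw hmemφ
        have hwq : (∫ x in Ω, w x ^ q) = 1 := by
          rw [← hmass]
          refine setIntegral_congr_fun hΩm fun x hx => ?_
          rw [hw' x, ← Real.rpow_mul (ha_pos x hx).le, hqp]
        have hφp : (∫ x in Ω, (φ x ^ 2) ^ p) = ∫ x in Ω, |φ x| ^ (2 * p) := by
          refine setIntegral_congr_fun hΩm fun x _ => ?_
          rw [← sq_abs, ← Real.rpow_natCast |φ x| 2, ← Real.rpow_mul (abs_nonneg _)]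
          norm_num
        rw [hwq, hφp] at H
        simpa using H
      · -- case p = 1
        have hw1 : ∀ x, w x = (α + lam * ψ x) ^ (0 : ℝ) := fun x => by
          rw [hw' x, ← hp1]; norm_num
        have heq : (∫ x in Ω, w x * φ x ^ 2) = ∫ x in Ω, |φ x| ^ (2 * p) := by
          refine setIntegral_congr_fun hΩm fun x _ => ?_
          rw [hw1 x, Real.rpow_zero, one_mul, ← hp1, mul_one,
            show (2 : ℝ) = ((2 : ℕ) : ℝ) by norm_num, Real.rpow_natCast, sq_abs]
        rw [heq, ← hp1]
        norm_num
    -- Λ ≤ dirE / J'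
    have hbdd : BddBelow {r : ℝ | ∃ φ : EN N → ℝ, testfun Ω φ ∧
        r = dirE Ω φ / (∫ x in Ω, |φ x| ^ (2 * p)) ^ (1 / p)} := by
      refine ⟨0, ?_⟩
      rintro r ⟨φ', _, rfl⟩
      refine div_nonneg (integral_nonneg fun x => by positivity) ?_
      exact Real.rpow_nonneg (integral_nonneg fun x => Real.rpow_nonneg (abs_nonneg _) _) _
    have hΛle : Λ ≤ dirE Ω φ / (∫ x in Ω, |φ x| ^ (2 * p)) ^ (1 / p) := by
      rw [hΛ]
      exact csInf_le hbdd ⟨φ, ⟨hφC, hφ0, x₀, hx₀Ω, hx₀⟩, rfl⟩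
    rw [le_div_iff₀ hJ'_pos] at hΛle
    refine ⟨hI_pos, ?_⟩
    calc Λ * (∫ x in Ω, w x * φ x ^ 2)
        ≤ Λ * (∫ x in Ω, |φ x| ^ (2 * p)) ^ (1 / p) :=
          mul_le_mul_of_nonneg_left hHolder hΛnn
      _ ≤ dirE Ω φ := hΛle
  -- nonemptiness of the eigenvalue Rayleigh set: a bump function
  have hS_ne : {r : ℝ | ∃ φ : EN N → ℝ, testfun Ω φ ∧
      r = (dirE Ω φ - lam * p * ∫ x in Ω, w x * φ x ^ 2) / ∫ x in Ω, w x * φ x ^ 2}.Nonempty := by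
    obtain ⟨x₀, hx₀⟩ : Ω.Nonempty := nonempty_of_measure_ne_zero (by rw [hvol]; exact one_ne_zero)
    obtain ⟨ε, hε, hball⟩ := Metric.isOpen_iff.mp hΩo x₀ hx₀
    let b : ContDiffBump x₀ := ⟨ε / 2, ε, half_pos hε, half_lt_self hε⟩
    refine ⟨_, ⟨fun x => b x, ⟨b.contDiff, fun x hx => ?_, x₀, hx₀, ?_⟩, rfl⟩⟩
    · refine b.zero_of_le_dist (le_of_not_gt fun hlt => hx (hball ?_))
      exact Metric.mem_ball.mpr hlt
    · have : b x₀ = 1 := b.one_of_mem_closedBall (Metric.mem_closedBall_self (by positivity))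
      simpa [this] using one_ne_zero
  have main : Λ - lam * p ≤ sInf {r : ℝ | ∃ φ : EN N → ℝ, testfun Ω φ ∧
      r = (dirE Ω φ - lam * p * ∫ x in Ω, w x * φ x ^ 2) / ∫ x in Ω, w x * φ x ^ 2} := by
    refine le_csInf hS_ne ?_
    rintro r ⟨φ, hφ, rfl⟩
    obtain ⟨hIpos, hΛI⟩ := key φ hφ
    rw [le_div_iff₀ hIpos]
    nlinarith [hΛI]
  exact ⟨main, le_trans (by linarith) main⟩
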